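/- Let ω be a weight on the unit circle with Fourier coefficients u_s = Sω(s), such that u_s ≠ 0 for s = 0,...,N-1 and ∑_s |s|^{N-1}|u_s| < ∞. Define P_j(z) = ∑_{k=0}^{j} (-z)^k/((j-k)!·k!·u_k) and Q_j(z) = ∑_{l∈ℤ\{0,...,j-1}} (Γ(j-l)/Γ(-l))·u_l·z^{-l} (where for l ≥ j the coefficient Γ(j-l)/Γ(-l) is interpreted as (-1)^j·l!/(l-j)!, and for l < 0 as (j-l-1)!/(-l-1)!). Then (1/2π)∫_{-π}^π P_a(e^{iθ})·Q_b(e^{iθ}) dθ = δ_{ab} for all 0 ≤ a, b ≤ N-1. -/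

import Mathlib

open MeasureTheory

/-- The coefficient `Γ(j-l)/Γ(-l)` of the weight function `Q_j`: it equals
`(j-l-1)!/(-l-1)!` for `l < 0`, `(-1)^j·l!/(l-j)!` for `l ≥ j`, and `0` otherwise. -/
noncomputable def coefQ (j : ℕ) (l : ℤ) : ℝ :=
  if l < 0 then (Nat.factorial ((j : ℤ) - l - 1).toNat : ℝ) / (Nat.factorial (-l - 1).toNat)
  else if (j : ℤ) ≤ l then (-1 : ℝ) ^ j * (Nat.factorial l.toNat : ℝ) /
    (Nat.factorial (l - (j : ℤ)).toNat)
  else 0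



lemma fourier_int (m : ℤ) :
    (∫ θ in (-Real.pi)..Real.pi, Complex.exp (Complex.I * θ) ^ m)
      = if m = 0 then (2 * Real.pi : ℂ) else 0 := by
  have key : ∀ θ : ℝ, Complex.exp (Complex.I * θ) ^ m
      = Complex.exp ((m * Complex.I) * θ) := by
    intro θ
    rw [← Complex.exp_int_mul]; ring_nf
  simp_rw [key]
  rcases eq_or_ne m 0 with hm | hm
  · simp [hm, sub_neg_eq_add]
    ring
  · rw [if_neg hm, integral_exp_mul_complex (by simp [hm, Complex.I_ne_zero])]
    have h1 : Complex.exp ((m * Complex.I) * (Real.pi : ℂ)) = (-1) ^ m := by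
      rw [show ((m : ℂ) * Complex.I) * (Real.pi : ℂ) = m * (Real.pi * Complex.I) by ring,
        Complex.exp_int_mul, Complex.exp_pi_mul_I]
    have h2 : Complex.exp ((m * Complex.I) * ((-Real.pi : ℝ) : ℂ)) = (-1) ^ (-m) := by
      rw [show ((m : ℂ) * Complex.I) * ((-Real.pi : ℝ) : ℂ)
          = ((-m : ℤ) : ℂ) * (Real.pi * Complex.I) by push_cast; ring,
        Complex.exp_int_mul, Complex.exp_pi_mul_I]
    rw [h1, h2]
    have : ((-1 : ℂ)) ^ (-m) = (-1) ^ m := by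
      rcases Int.even_or_odd m with he | ho
      · rw [he.neg_one_zpow, he.neg.neg_one_zpow]
      · rw [ho.neg_one_zpow, ho.neg.neg_one_zpow]
    rw [this, sub_self, zero_div]


lemma norm_z (θ : ℝ) (m : ℤ) : ‖Complex.exp (Complex.I * θ) ^ m‖ = 1 := by
  rw [norm_zpow, Complex.norm_exp]
  simp

lemma key_integral (d : ℤ → ℂ) (hd : Summable fun l => ‖d l‖) (k : ℤ) :
    (∫ θ in (-Real.pi)..Real.pi, ∑' l : ℤ, d l * Complex.exp (Complex.I * θ) ^ (k - l))
      = 2 * Real.pi * d k := by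
  have hle : (-Real.pi : ℝ) ≤ Real.pi := by linarith [Real.pi_pos]
  have hcont : ∀ l : ℤ, Continuous fun θ : ℝ => d l * Complex.exp (Complex.I * θ) ^ (k - l) := by
    intro l
    exact continuous_const.mul (((Complex.continuous_exp.comp
      (continuous_const.mul Complex.continuous_ofReal)).zpow₀ _
      (fun x => Or.inl (Complex.exp_ne_zero _))))
  rw [intervalIntegral.integral_of_le hle, MeasureTheory.integral_tsum
      (fun l => (hcont l).aestronglyMeasurable)]
  · have : ∀ l : ℤ, (∫ θ in Set.Ioc (-Real.pi) Real.pi,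
        d l * Complex.exp (Complex.I * θ) ^ (k - l))
        = d l * (if l = k then (2 * Real.pi : ℂ) else 0) := by
      intro l
      rw [← intervalIntegral.integral_of_le hle, intervalIntegral.integral_const_mul,
        fourier_int]
      congr 1
      simp [sub_eq_zero, eq_comm]
    simp_rw [this]
    rw [tsum_eq_single k (by intro l hl; simp [hl])]
    simp [mul_comm]
  · have hnorm : ∀ (l : ℤ) (θ : ℝ),
        (‖d l * Complex.exp (Complex.I * θ) ^ (k - l)‖₊ : ENNReal) = ‖d l‖₊ := by
      intro l θ
      have h1 : ‖Complex.exp (Complex.I * θ) ^ (k - l)‖₊ = 1 := by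
        have := norm_z θ (k - l)
        rwa [← coe_nnnorm, NNReal.coe_eq_one] at this
      simp [nnnorm_mul, h1]
    calc ∑' l : ℤ, ∫⁻ θ in Set.Ioc (-Real.pi) Real.pi,
          (‖d l * Complex.exp (Complex.I * θ) ^ (k - l)‖₊ : ENNReal)
        = ∑' l : ℤ, (‖d l‖₊ : ENNReal) * volume (Set.Ioc (-Real.pi) Real.pi) := by
          congr 1; funext l
          simp_rw [hnorm l]
          rw [MeasureTheory.setLIntegral_const]
      _ = (∑' l : ℤ, (‖d l‖₊ : ENNReal)) * volume (Set.Ioc (-Real.pi) Real.pi) :=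
          ENNReal.tsum_mul_right
      _ ≠ ⊤ := by
          apply ENNReal.mul_ne_top
          · rw [ENNReal.tsum_coe_ne_top_iff_summable_coe]
            simpa using hd
          · simp [Real.volume_Ioc]


lemma factAux (b m : ℕ) : (b + m).factorial ≤ (b + m) ^ b * m.factorial := by
  induction b with
  | zero => simp
  | succ b ih =>
      have h1 : (b + 1 + m).factorial = (b + 1 + m) * (b + m).factorial := by
        rw [show b + 1 + m = (b + m) + 1 by ring, Nat.factorial_succ]
      rw [h1]
      calc (b + 1 + m) * (b + m).factorial ≤ (b + 1 + m) * ((b + m) ^ b * m.factorial) :=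
            Nat.mul_le_mul_left _ ih
        _ ≤ (b + 1 + m) * ((b + 1 + m) ^ b * m.factorial) := by
            apply Nat.mul_le_mul_left
            exact Nat.mul_le_mul_right _ (Nat.pow_le_pow_left (by omega) _)
        _ = (b + 1 + m) ^ (b + 1) * m.factorial := by ring

lemma coefQ_abs_le (b : ℕ) (l : ℤ) : |coefQ b l| ≤ ((b + l.natAbs : ℕ) : ℝ) ^ b := by
  unfold coefQ
  split_ifs with h1 h2
  · -- l < 0
    have h3 : ((b : ℤ) - l - 1).toNat = b + (-l - 1).toNat := by omega
    have h4 : b + l.natAbs = b + ((-l - 1).toNat + 1) := by omega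
    rw [h3, h4]
    set m : ℕ := (-l - 1).toNat
    rw [abs_of_nonneg (by positivity), div_le_iff₀ (by positivity)]
    have key : (b + m).factorial ≤ (b + (m + 1)) ^ b * m.factorial :=
      le_trans (factAux b m) (Nat.mul_le_mul_right _ (Nat.pow_le_pow_left (by omega) _))
    exact_mod_cast key
  · -- b ≤ l
    have hbn : b ≤ l.toNat := by omega
    have h3 : (l - (b : ℤ)).toNat = l.toNat - b := by omega
    have h4 : b + l.natAbs = b + l.toNat := by omega
    rw [h3, h4]
    set n : ℕ := l.toNat
    set m : ℕ := n - b with hm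
    have hnm : n = b + m := by omega
    rw [abs_div, abs_mul, abs_pow, abs_neg, abs_one, one_pow, one_mul,
      abs_of_nonneg (by positivity : (0:ℝ) ≤ (n.factorial : ℝ)),
      abs_of_nonneg (by positivity : (0:ℝ) ≤ (m.factorial : ℝ)),
      div_le_iff₀ (by positivity)]
    have key : n.factorial ≤ (b + n) ^ b * m.factorial := by
      calc n.factorial = (b + m).factorial := by rw [← hnm]
        _ ≤ (b + m) ^ b * m.factorial := factAux b m
        _ ≤ (b + n) ^ b * m.factorial :=
            Nat.mul_le_mul_right _ (Nat.pow_le_pow_left (by omega) _)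
    exact_mod_cast key
  · rw [abs_zero]; positivity

lemma summable_coef (N : ℕ) (u : ℤ → ℂ)
    (hsum : Summable fun s : ℤ => (|s| : ℝ) ^ (N - 1) * ‖u s‖)
    (b : ℕ) (hb : b < N) :
    Summable fun l : ℤ => ‖(coefQ b l : ℂ) * u l‖ := by
  set C : ℝ := ((b : ℝ) + 1) ^ b with hC
  have hC1 : 1 ≤ C := one_le_pow₀ (by push_cast; linarith [Nat.cast_nonneg (α := ℝ) b])
  have hgs : Summable (fun l : ℤ => C * ((|l| : ℝ) ^ (N - 1) * ‖u l‖)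
      + (if l = 0 then ‖u 0‖ else 0)) :=
    (hsum.mul_left C).add (hasSum_ite_eq 0 ‖u 0‖).summable
  apply Summable.of_nonneg_of_le (fun l => norm_nonneg _) _ hgs
  · intro l
    rw [norm_mul, Complex.norm_real, Real.norm_eq_abs]
    rcases eq_or_ne l 0 with rfl | hl
    · rw [if_pos rfl]
      have h00 : coefQ b 0 = if b = 0 then 1 else 0 := by
        unfold coefQ
        rcases Nat.eq_zero_or_pos b with hb0 | hb0
        · simp [hb0]
        · rw [if_neg (by omega), if_neg (by exact_mod_cast by omega), if_neg (by omega)]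
      have h0 : |coefQ b 0| ≤ 1 := by rw [h00]; split_ifs <;> simp
      have h1 : |coefQ b 0| * ‖u 0‖ ≤ 1 * ‖u 0‖ :=
        mul_le_mul_of_nonneg_right h0 (norm_nonneg _)
      have h2 : (0:ℝ) ≤ C * ((|(0:ℤ)| : ℝ) ^ (N - 1) * ‖u 0‖) := by positivity
      linarith
    · rw [if_neg hl, add_zero]
      have habs : ((l.natAbs : ℕ) : ℝ) = |(l:ℝ)| := by
        rw [Nat.cast_natAbs, Int.cast_abs]
      have h1 : (1:ℝ) ≤ (|l| : ℝ) := by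
        rw [← Int.cast_abs]; exact_mod_cast Int.one_le_abs hl
      have h2 : |coefQ b l| ≤ C * (|l| : ℝ) ^ (N - 1) := by
        calc |coefQ b l| ≤ ((b + l.natAbs : ℕ) : ℝ) ^ b := coefQ_abs_le b l
          _ = ((b : ℝ) + (|l| : ℝ)) ^ b := by rw [Nat.cast_add, habs]
          _ ≤ (((b : ℝ) + 1) * (|l| : ℝ)) ^ b := by
              apply pow_le_pow_left₀ (by positivity)
              nlinarith
          _ = C * (|l| : ℝ) ^ b := by rw [mul_pow]
          _ ≤ C * (|l| : ℝ) ^ (N - 1) := by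
              apply mul_le_mul_of_nonneg_left _ (by positivity)
              exact pow_le_pow_right₀ h1 (by omega)
      calc |coefQ b l| * ‖u l‖ ≤ (C * (|l| : ℝ) ^ (N - 1)) * ‖u l‖ :=
            mul_le_mul_of_nonneg_right h2 (norm_nonneg _)
        _ = C * ((|l| : ℝ) ^ (N - 1) * ‖u l‖) := by
            ring


lemma coefQ_natCast (b k : ℕ) :
    coefQ b (k : ℤ) = if b ≤ k then
      ((-1:ℝ)) ^ b * (Nat.factorial k : ℝ) / (Nat.factorial (k - b) : ℝ) else 0 := by
  unfold coefQ
  rw [if_neg (by omega)]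
  rcases le_or_gt b k with h | h
  · rw [if_pos (by exact_mod_cast h), if_pos h,
      show ((k:ℤ)).toNat = k by omega, show ((k:ℤ) - (b:ℤ)).toNat = k - b by omega]
  · rw [if_neg (by exact_mod_cast by omega), if_neg (by omega)]

lemma finalSum (a b : ℕ) :
    (∑ k ∈ Finset.range (a + 1), ((-1:ℂ)) ^ k * (coefQ b (k:ℤ) : ℂ) /
      ((Nat.factorial (a - k) : ℂ) * (Nat.factorial k : ℂ)))
      = if a = b then 1 else 0 := by
  rcases lt_or_ge a b with hab | hab
  · rw [if_neg (by omega)]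
    apply Finset.sum_eq_zero
    intro k hk
    rw [Finset.mem_range] at hk
    rw [coefQ_natCast, if_neg (by omega)]
    simp
  · -- b ≤ a
    set n := a - b with hn
    have han : a = b + n := by omega
    have hsplit : ∑ k ∈ Finset.range (a + 1), ((-1:ℂ)) ^ k * (coefQ b (k:ℤ) : ℂ) /
        ((Nat.factorial (a - k) : ℂ) * (Nat.factorial k : ℂ))
        = ∑ k ∈ Finset.Ico b (a + 1), ((-1:ℂ)) ^ k * (coefQ b (k:ℤ) : ℂ) /
        ((Nat.factorial (a - k) : ℂ) * (Nat.factorial k : ℂ)) := by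
      rw [Finset.range_eq_Ico, ← Finset.sum_Ico_consecutive _ (Nat.zero_le b) (by omega : b ≤ a + 1)]
      have : ∑ k ∈ Finset.Ico 0 b, ((-1:ℂ)) ^ k * (coefQ b (k:ℤ) : ℂ) /
          ((Nat.factorial (a - k) : ℂ) * (Nat.factorial k : ℂ)) = 0 := by
        apply Finset.sum_eq_zero
        intro k hk
        rw [Finset.mem_Ico] at hk
        rw [coefQ_natCast, if_neg (by omega)]
        simp
      rw [this, zero_add]
    rw [hsplit, Finset.sum_Ico_eq_sum_range]
    have hcard : a + 1 - b = n + 1 := by omega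
    rw [hcard]
    have hterm : ∀ j ∈ Finset.range (n + 1),
        ((-1:ℂ)) ^ (b + j) * (coefQ b ((b + j : ℕ):ℤ) : ℂ) /
          ((Nat.factorial (a - (b + j)) : ℂ) * (Nat.factorial (b + j) : ℂ))
        = ((-1:ℂ)) ^ j * (n.choose j : ℂ) / (Nat.factorial n : ℂ) := by
      intro j hj
      rw [Finset.mem_range] at hj
      have hjn : j ≤ n := by omega
      rw [coefQ_natCast, if_pos (by omega)]
      have h1 : b + j - b = j := by omega
      have h2 : a - (b + j) = n - j := by omega
      rw [h1, h2]
      have hchoose : (n.choose j : ℂ) * (Nat.factorial j : ℂ) * (Nat.factorial (n - j) : ℂ)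
          = (Nat.factorial n : ℂ) := by
        exact_mod_cast congrArg (fun m : ℕ => (m : ℂ)) (Nat.choose_mul_factorial_mul_factorial hjn)
      have hf1 : ((Nat.factorial (b+j) : ℂ)) ≠ 0 := Nat.cast_ne_zero.2 (Nat.factorial_ne_zero _)
      have hf2 : ((Nat.factorial j : ℂ)) ≠ 0 := Nat.cast_ne_zero.2 (Nat.factorial_ne_zero _)
      have hf3 : ((Nat.factorial (n-j) : ℂ)) ≠ 0 := Nat.cast_ne_zero.2 (Nat.factorial_ne_zero _)
      have hf4 : ((Nat.factorial n : ℂ)) ≠ 0 := Nat.cast_ne_zero.2 (Nat.factorial_ne_zero _)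
      have hsign : ((-1:ℂ))^(b+j) * (-1)^b = (-1)^j := by
        rw [pow_add, mul_right_comm, ← pow_add]
        rw [Even.neg_one_pow ⟨b, rfl⟩, one_mul]
      have hkey : (1:ℂ)/((Nat.factorial j : ℂ) * (Nat.factorial (n-j) : ℂ))
          = (n.choose j : ℂ)/(Nat.factorial n : ℂ) := by
        rw [div_eq_div_iff (mul_ne_zero hf2 hf3) hf4, one_mul, ← hchoose]; ring
      push_cast
      calc ((-1:ℂ))^(b+j) * ((-1)^b * ((Nat.factorial (b+j) : ℂ)) / (Nat.factorial j : ℂ)) /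
            (((Nat.factorial (n-j) : ℂ)) * ((Nat.factorial (b+j) : ℂ)))
          = ((-1:ℂ))^(b+j) * (-1)^b * (((Nat.factorial (b+j) : ℂ))/((Nat.factorial (b+j) : ℂ)))
            * ((1:ℂ)/((Nat.factorial j : ℂ) * (Nat.factorial (n-j) : ℂ))) := by ring
        _ = ((-1:ℂ))^j * (n.choose j : ℂ) / (Nat.factorial n : ℂ) := by
            rw [hsign, div_self hf1, hkey]; ring
    rw [Finset.sum_congr rfl hterm]
    have hsum2 : (∑ j ∈ Finset.range (n + 1), ((-1:ℂ)) ^ j * (n.choose j : ℂ))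
        = if n = 0 then 1 else 0 := by
      have := Int.alternating_sum_range_choose (n := n)
      have := congrArg (fun z : ℤ => (z : ℂ)) this
      push_cast at this
      rw [this]
    rw [← Finset.sum_div, hsum2]
    rcases eq_or_ne n 0 with h0 | h0
    · rw [if_pos h0, if_pos (by omega)]
      rw [h0] at *
      simp
    · rw [if_neg h0, if_neg (by omega), zero_div]



theorem biorthonormality (N : ℕ) (hN : 1 ≤ N) (u : ℤ → ℂ)
    (hu : ∀ s : ℕ, s < N → u s ≠ 0)
    (hsum : Summable fun s : ℤ => (|s| : ℝ) ^ (N - 1) * ‖u s‖)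
    (a b : ℕ) (ha : a < N) (hb : b < N) :
    (1 / (2 * Real.pi) : ℂ) *
        ∫ θ in (-Real.pi)..Real.pi,
          (∑ k ∈ Finset.range (a + 1),
              (-(Complex.exp (Complex.I * θ))) ^ k /
                ((Nat.factorial (a - k)) * (Nat.factorial k) * u k)) *
            (∑' l : ℤ, (coefQ b l : ℂ) * u l * Complex.exp (Complex.I * θ) ^ (-l))
      = if a = b then 1 else 0 := by
  have hπ : ((2 : ℂ) * (Real.pi : ℂ)) ≠ 0 := by
    simp [Real.pi_ne_zero, Complex.ofReal_ne_zero]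
  set d : ℤ → ℂ := fun l => (coefQ b l : ℂ) * u l with hd_def
  set c : ℕ → ℂ := fun k =>
    ((Nat.factorial (a - k) : ℂ)) * ((Nat.factorial k : ℂ)) * u k with hc_def
  have hd : Summable fun l : ℤ => ‖d l‖ := summable_coef N u hsum b hb
  have hcont_term : ∀ l : ℤ,
      Continuous fun θ : ℝ => d l * Complex.exp (Complex.I * θ) ^ (-l) := by
    intro l
    exact continuous_const.mul ((Complex.continuous_exp.comp
      (continuous_const.mul Complex.continuous_ofReal)).zpow₀ _
      (fun x => Or.inl (Complex.exp_ne_zero _)))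
  have hT : Continuous fun θ : ℝ => ∑' l : ℤ, d l * Complex.exp (Complex.I * θ) ^ (-l) := by
    apply continuous_tsum hcont_term hd
    intro l θ
    rw [norm_mul, norm_z, mul_one]
  -- rewrite the integrand as a finite sum
  have hstep : ∀ (k : ℕ) (θ : ℝ),
      (-(Complex.exp (Complex.I * θ))) ^ k / c k *
        (∑' l : ℤ, d l * Complex.exp (Complex.I * θ) ^ (-l))
      = ((-1 : ℂ) ^ k / c k) *
        (∑' l : ℤ, d l * Complex.exp (Complex.I * θ) ^ ((k : ℤ) - l)) := by
    intro k θ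
    have hzero := Complex.exp_ne_zero (Complex.I * θ)
    rw [← tsum_mul_left, ← tsum_mul_left]
    apply tsum_congr
    intro l
    rw [neg_pow, show (Complex.exp (Complex.I * θ)) ^ k
        = (Complex.exp (Complex.I * θ)) ^ (k : ℤ) from (zpow_natCast _ k).symm,
      show ((k : ℤ) - l) = (k : ℤ) + (-l) from sub_eq_add_neg _ _, zpow_add₀ hzero]
    ring
  have hInt : ∀ k ∈ Finset.range (a + 1), IntervalIntegrable
      (fun θ : ℝ => (-(Complex.exp (Complex.I * θ))) ^ k / c k *
        (∑' l : ℤ, d l * Complex.exp (Complex.I * θ) ^ (-l)))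
      volume (-Real.pi) Real.pi := by
    intro k _
    apply Continuous.intervalIntegrable
    exact (((Complex.continuous_exp.comp
      (continuous_const.mul Complex.continuous_ofReal)).neg.pow k).div_const _).mul hT
  calc (1 / (2 * Real.pi) : ℂ) *
        ∫ θ in (-Real.pi)..Real.pi,
          (∑ k ∈ Finset.range (a + 1), (-(Complex.exp (Complex.I * θ))) ^ k / c k) *
            (∑' l : ℤ, d l * Complex.exp (Complex.I * θ) ^ (-l))
      = (1 / (2 * Real.pi) : ℂ) *
        ∑ k ∈ Finset.range (a + 1), ∫ θ in (-Real.pi)..Real.pi,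
          (-(Complex.exp (Complex.I * θ))) ^ k / c k *
            (∑' l : ℤ, d l * Complex.exp (Complex.I * θ) ^ (-l)) := by
        congr 1
        simp_rw [Finset.sum_mul]
        exact intervalIntegral.integral_finset_sum hInt
    _ = (1 / (2 * Real.pi) : ℂ) * ∑ k ∈ Finset.range (a + 1),
          ((-1 : ℂ) ^ k / c k) * (2 * Real.pi * d k) := by
        congr 1
        apply Finset.sum_congr rfl
        intro k _
        simp_rw [hstep k]
        rw [intervalIntegral.integral_const_mul, key_integral d hd k]
    _ = ∑ k ∈ Finset.range (a + 1), ((-1 : ℂ)) ^ k * (coefQ b (k : ℤ) : ℂ) /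
          ((Nat.factorial (a - k) : ℂ) * (Nat.factorial k : ℂ)) := by
        rw [Finset.mul_sum]
        apply Finset.sum_congr rfl
        intro k hk
        rw [Finset.mem_range] at hk
        have huk : u k ≠ 0 := hu k (by omega)
        have hf1 : ((Nat.factorial (a - k) : ℂ)) ≠ 0 := Nat.cast_ne_zero.2 (Nat.factorial_ne_zero _)
        have hf2 : ((Nat.factorial k : ℂ)) ≠ 0 := Nat.cast_ne_zero.2 (Nat.factorial_ne_zero _)
        rw [hd_def, hc_def]
        field_simp
    _ = if a = b then 1 else 0 := finalSum a b
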